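/- Let q1, q2 be positive integers, d = gcd(q1,q2), v1 = gcd(q1/d, d^∞), v2 = gcd(q2/d, d^∞), u1 = q1/(v1 d), u2 = q2/(v2 d), where gcd(a, b^∞) denotes the largest divisor of a composed only of primes dividing b. Then q1 = d v1 u1, q2 = d v2 u2, gcd(u1, u2) = 1, and gcd(u_i, d v1 v2) = 1 for i = 1, 2. -/

import Mathlib

open Finset

/-- `gcd(a, b^∞)`: the largest divisor of `a` composed only of primes dividing `b`. -/
def smoothPart (a b : ℕ) : ℕ :=
  ∏ p ∈ a.primeFactors, if p ∣ b then p ^ a.factorization p else 1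

lemma smoothPart_dvd (a b : ℕ) : smoothPart a b ∣ a := by
  rcases eq_or_ne a 0 with rfl | ha
  · exact dvd_zero _
  · have h : smoothPart a b ∣ ∏ p ∈ a.primeFactors, p ^ a.factorization p := by
      apply Finset.prod_dvd_prod_of_dvd
      intro p hp
      split
      · exact dvd_rfl
      · exact one_dvd _
    have key : ∏ p ∈ a.primeFactors, p ^ a.factorization p = a := by
      rw [← Nat.support_factorization]
      exact Nat.factorization_prod_pow_eq_self ha
    rwa [key] at h

lemma pow_factorization_dvd_smoothPart {p a b : ℕ} (hp : p.Prime) (hpb : p ∣ b) :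
    p ^ a.factorization p ∣ smoothPart a b := by
  rcases eq_or_ne a 0 with rfl | ha
  · simp [smoothPart]
  by_cases hpa : p ∣ a
  · have hmem : p ∈ a.primeFactors := Nat.mem_primeFactors.2 ⟨hp, hpa, ha⟩
    have := Finset.dvd_prod_of_mem
      (fun p => if p ∣ b then p ^ a.factorization p else 1) hmem
    simpa [hpb, smoothPart] using this
  · have : a.factorization p = 0 := Nat.factorization_eq_zero_of_not_dvd hpa
    simp [this]

lemma coprime_div_smoothPart {a : ℕ} (b : ℕ) (ha : a ≠ 0) :
    Nat.Coprime (a / smoothPart a b) b := by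
  rw [Nat.coprime_comm, Nat.coprime_iff_gcd_eq_one]
  by_contra hg
  set p := (Nat.gcd b (a / smoothPart a b)).minFac with hpdef
  have hp : p.Prime := Nat.minFac_prime hg
  have hpb : p ∣ b := (Nat.minFac_dvd _).trans (Nat.gcd_dvd_left _ _)
  have hpu : p ∣ a / smoothPart a b := (Nat.minFac_dvd _).trans (Nat.gcd_dvd_right _ _)
  have hv : smoothPart a b ∣ a := smoothPart_dvd a b
  have hkey : p ^ (a.factorization p + 1) ∣ a := by
    have h1 : p ^ a.factorization p ∣ smoothPart a b :=
      pow_factorization_dvd_smoothPart hp hpb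
    calc p ^ (a.factorization p + 1) = p ^ a.factorization p * p := by ring
    _ ∣ smoothPart a b * (a / smoothPart a b) := mul_dvd_mul h1 hpu
    _ = a := Nat.mul_div_cancel' hv
  have := (Nat.Prime.pow_dvd_iff_le_factorization hp ha).1 hkey
  omega

lemma prime_dvd_smoothPart {p a b : ℕ} (hp : p.Prime) (h : p ∣ smoothPart a b) : p ∣ b := by
  rw [smoothPart, Prime.dvd_finset_prod_iff hp.prime] at h
  obtain ⟨q, hq, hdvd⟩ := h
  by_cases hqb : q ∣ b
  · rw [if_pos hqb] at hdvd
    have hq' : q.Prime := Nat.prime_of_mem_primeFactors hq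
    have : p ∣ q := hp.dvd_of_dvd_pow hdvd
    rwa [(Nat.prime_dvd_prime_iff_eq hp hq').1 this]
  · rw [if_neg hqb] at hdvd
    exact absurd (Nat.dvd_one.1 hdvd) hp.ne_one

lemma coprime_of_prime (m n : ℕ) (h : ∀ p, p.Prime → p ∣ m → p ∣ n → False) :
    Nat.Coprime m n := by
  rw [Nat.coprime_iff_gcd_eq_one]
  by_contra hg
  exact h _ (Nat.minFac_prime hg)
    ((Nat.minFac_dvd _).trans (Nat.gcd_dvd_left _ _))
    ((Nat.minFac_dvd _).trans (Nat.gcd_dvd_right _ _))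

/-- with `d = gcd(q1,q2)`, `v_i = gcd(q_i/d, d^∞)`, `u_i = q_i/(v_i d)`,
one has `q_i = d v_i u_i`, `gcd(u1,u2) = 1` and `gcd(u_i, d v1 v2) = 1`. -/
theorem stmt5 (q1 q2 : ℕ) (hq1 : 0 < q1) (hq2 : 0 < q2) :
    let d := Nat.gcd q1 q2
    let v1 := smoothPart (q1 / d) d
    let v2 := smoothPart (q2 / d) d
    let u1 := q1 / (v1 * d)
    let u2 := q2 / (v2 * d)
    q1 = d * v1 * u1 ∧ q2 = d * v2 * u2 ∧ Nat.Coprime u1 u2 ∧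
      Nat.Coprime u1 (d * v1 * v2) ∧ Nat.Coprime u2 (d * v1 * v2) := by
  intro d v1 v2 u1 u2
  have hd : 0 < d := Nat.gcd_pos_of_pos_left q2 hq1
  have hd1 : d ∣ q1 := Nat.gcd_dvd_left _ _
  have hd2 : d ∣ q2 := Nat.gcd_dvd_right _ _
  set n1 := q1 / d with hn1def
  set n2 := q2 / d with hn2def
  have hq1' : q1 = n1 * d := (Nat.div_mul_cancel hd1).symm
  have hq2' : q2 = n2 * d := (Nat.div_mul_cancel hd2).symm
  have hn1 : n1 ≠ 0 := by
    rcases Nat.eq_zero_or_pos n1 with h | h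
    · rw [h] at hq1'; omega
    · omega
  have hn2 : n2 ≠ 0 := by
    rcases Nat.eq_zero_or_pos n2 with h | h
    · rw [h] at hq2'; omega
    · omega
  have hv1 : v1 ∣ n1 := smoothPart_dvd n1 d
  have hv2 : v2 ∣ n2 := smoothPart_dvd n2 d
  have hu1 : u1 = n1 / v1 := by
    show q1 / (v1 * d) = n1 / v1
    rw [hq1', Nat.mul_div_mul_right _ _ hd]
  have hu2 : u2 = n2 / v2 := by
    show q2 / (v2 * d) = n2 / v2
    rw [hq2', Nat.mul_div_mul_right _ _ hd]
  have he1 : q1 = d * v1 * u1 := by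
    rw [hu1, mul_assoc, Nat.mul_div_cancel' hv1, hq1', mul_comm]
  have he2 : q2 = d * v2 * u2 := by
    rw [hu2, mul_assoc, Nat.mul_div_cancel' hv2, hq2', mul_comm]
  have hc1d : Nat.Coprime u1 d := by rw [hu1]; exact coprime_div_smoothPart d hn1
  have hc2d : Nat.Coprime u2 d := by rw [hu2]; exact coprime_div_smoothPart d hn2
  have hnd : ∀ p : ℕ, p.Prime → p ∣ u1 → p ∣ d → False := by
    intro p hp h1 h2
    have : p ∣ Nat.gcd u1 d := Nat.dvd_gcd h1 h2
    rw [hc1d] at this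
    exact hp.ne_one (Nat.dvd_one.1 this)
  have hnd2 : ∀ p : ℕ, p.Prime → p ∣ u2 → p ∣ d → False := by
    intro p hp h1 h2
    have : p ∣ Nat.gcd u2 d := Nat.dvd_gcd h1 h2
    rw [hc2d] at this
    exact hp.ne_one (Nat.dvd_one.1 this)
  have hu1q1 : u1 ∣ q1 := ⟨d * v1, by rw [he1]; ring⟩
  have hu2q2 : u2 ∣ q2 := ⟨d * v2, by rw [he2]; ring⟩
  refine ⟨he1, he2, ?_, ?_, ?_⟩
  · exact coprime_of_prime _ _ fun p hp h1 h2 =>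
      hnd p hp h1 (Nat.dvd_gcd (h1.trans hu1q1) (h2.trans hu2q2))
  · refine (Nat.Coprime.mul_right (Nat.Coprime.mul_right hc1d ?_) ?_)
    · exact coprime_of_prime _ _ fun p hp h1 h2 => hnd p hp h1 (prime_dvd_smoothPart hp h2)
    · exact coprime_of_prime _ _ fun p hp h1 h2 => hnd p hp h1 (prime_dvd_smoothPart hp h2)
  · refine (Nat.Coprime.mul_right (Nat.Coprime.mul_right hc2d ?_) ?_)
    · exact coprime_of_prime _ _ fun p hp h1 h2 => hnd2 p hp h1 (prime_dvd_smoothPart hp h2)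
    · exact coprime_of_prime _ _ fun p hp h1 h2 => hnd2 p hp h1 (prime_dvd_smoothPart hp h2)
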